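/- Let (θ₁, φ₁) and (θ₂, φ₂) be independent, each uniformly distributed on [0,2π]², set h₁ := sin θ₁·sin φ₁, h₂ := sin θ₂·sin φ₂, and fix a real number a. Then for all real s₁, s₂, E[cos(s₁·a·(h₁ − h₂))·cos(s₂·a·(h₁ − h₂))] = (1/2)·(J₀((s₁ + s₂)·a/2)⁴ + J₀((s₁ − s₂)·a/2)⁴). -/

import Mathlib

open Real MeasureTheory Finset

/-- Bessel function of the first kind of order zero (integral representation). -/
noncomputable def J₀ (x : ℝ) : ℝ :=
  (1 / (2 * π)) * ∫ t in (0:ℝ)..(2 * π), Real.cos (x * Real.sin t)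

lemma shift_int (f : ℝ → ℝ) (hf : Function.Periodic f (2 * π)) (c : ℝ) :
    (∫ t in (0:ℝ)..(2 * π), f (t + c)) = ∫ t in (0:ℝ)..(2 * π), f t := by
  rw [intervalIntegral.integral_comp_add_right]
  simpa [add_comm] using hf.intervalIntegral_add_eq c 0

lemma cosI (b : ℝ) : (∫ t in (0:ℝ)..(2 * π), Real.cos (b * Real.sin t)) = 2 * π * J₀ b := by
  rw [J₀]
  field_simp

lemma sinI (b : ℝ) : (∫ t in (0:ℝ)..(2 * π), Real.sin (b * Real.sin t)) = 0 := by
  have hper : Function.Periodic (fun t => Real.sin (b * Real.sin t)) (2 * π) := by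
    intro x; simp [Real.sin_add_two_pi]
  have h := shift_int _ hper π
  simp only [Real.sin_add_pi, mul_neg, Real.sin_neg] at h
  rw [intervalIntegral.integral_neg] at h
  linarith

lemma sinCosI (b : ℝ) : (∫ t in (0:ℝ)..(2 * π), Real.sin (b * Real.cos t)) = 0 := by
  have hper : Function.Periodic (fun t => Real.sin (b * Real.cos t)) (2 * π) := by
    intro x; simp [Real.cos_add_two_pi]
  have h := shift_int _ hper π
  simp only [Real.cos_add_pi, mul_neg, Real.sin_neg] at h
  rw [intervalIntegral.integral_neg] at h
  linarith

lemma cosCosI (b : ℝ) : (∫ t in (0:ℝ)..(2 * π), Real.cos (b * Real.cos t)) = 2 * π * J₀ b := by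
  have hper : Function.Periodic (fun t => Real.cos (b * Real.cos t)) (2 * π) := by
    intro x; simp [Real.cos_add_two_pi]
  have h := shift_int _ hper (π / 2)
  simp only [Real.cos_add_pi_div_two, mul_neg, Real.cos_neg] at h
  rw [← h, cosI]

@[fun_prop]
lemma contJ : Continuous J₀ := by
  have : Continuous fun x : ℝ => ∫ t in (0:ℝ)..(2 * π), Real.cos (x * Real.sin t) := by
    apply intervalIntegral.continuous_parametric_intervalIntegral_of_continuous'
    fun_prop
  unfold J₀
  fun_prop

lemma doubling (g : ℝ → ℝ) (hg : Continuous g) (hp : Function.Periodic g (2 * π)) (x : ℝ) :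
    (∫ t in (0:ℝ)..(2 * π), g (x + 2 * t)) = ∫ t in (0:ℝ)..(2 * π), g t := by
  have h1 : (∫ t in (0:ℝ)..(2 * π), g (x + 2 * t))
      = (2:ℝ)⁻¹ • ∫ u in (2*(0:ℝ))..(2*(2 * π)), g (x + u) := by
    rw [← intervalIntegral.integral_comp_mul_left (fun u => g (x + u)) (two_ne_zero)]
  have hgx : Continuous fun u => g (x + u) := by fun_prop
  have hpx : Function.Periodic (fun u => g (x + u)) (2 * π) := by
    intro u; simp only []; rw [show x + (u + 2 * π) = (x + u) + 2 * π by ring, hp (x + u)]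
  have h2 : (∫ u in (0:ℝ)..(2 * π), g (x + u)) + (∫ u in (2*π:ℝ)..(2*(2 * π)), g (x + u))
      = ∫ u in (2*(0:ℝ))..(2*(2 * π)), g (x + u) := by
    rw [show (2*(0:ℝ)) = (0:ℝ) by ring]
    exact intervalIntegral.integral_add_adjacent_intervals
      (hgx.intervalIntegrable _ _) (hgx.intervalIntegrable _ _)
  have h3 : (∫ u in (2*π:ℝ)..(2*(2 * π)), g (x + u)) = ∫ u in (0:ℝ)..(2 * π), g (x + u) := by
    have := hpx.intervalIntegral_add_eq (2 * π) 0
    simpa [show (2*π:ℝ) + 2*π = 2*(2*π) by ring] using this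
  have h4 : (∫ u in (0:ℝ)..(2 * π), g (x + u)) = ∫ t in (0:ℝ)..(2 * π), g t := by
    have := shift_int g hp x
    simp only [add_comm] at this ⊢
    exact this
  rw [h1, ← h2, h3, h4]
  simp [smul_eq_mul]; ring

lemma swap_int (F : ℝ → ℝ → ℝ) (hF : Continuous fun p : ℝ × ℝ => F p.1 p.2) :
    (∫ x in (0:ℝ)..(2 * π), ∫ y in (0:ℝ)..(2 * π), F x y)
      = ∫ y in (0:ℝ)..(2 * π), ∫ x in (0:ℝ)..(2 * π), F x y := by
  have h2 : (0:ℝ) ≤ 2 * π := by positivity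
  have hint : IntegrableOn (fun p : ℝ × ℝ => F p.1 p.2)
      (Set.Ioc 0 (2 * π) ×ˢ Set.Ioc 0 (2 * π)) := by
    apply ((hF.continuousOn).integrableOn_compact (isCompact_Icc.prod isCompact_Icc)).mono_set
    exact Set.prod_mono Set.Ioc_subset_Icc_self Set.Ioc_subset_Icc_self
  simp only [intervalIntegral.integral_of_le h2]
  have hInt : Integrable (Function.uncurry F)
      ((volume.restrict (Set.Ioc (0:ℝ) (2 * π))).prod (volume.restrict (Set.Ioc (0:ℝ) (2 * π)))) := by
    rw [Measure.prod_restrict]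
    rw [← Measure.volume_eq_prod]
    exact hint
  exact MeasureTheory.integral_integral_swap hInt

lemma P_eq (c : ℝ) :
    (∫ θ in (0:ℝ)..(2 * π), ∫ φ in (0:ℝ)..(2 * π), Real.cos (c * Real.sin θ * Real.sin φ))
      = (2 * π * J₀ (c / 2)) ^ 2 := by
  set z := c / 2 with hz
  have e1 : ∀ θ φ : ℝ, c * Real.sin θ * Real.sin φ
      = z * Real.cos (θ - φ) - z * Real.cos (θ + φ) := by
    intro θ φ; rw [Real.cos_sub, Real.cos_add, hz]; ring
  simp_rw [e1]
  have e2 : ∀ θ : ℝ, (∫ φ in (0:ℝ)..(2 * π), Real.cos (z * Real.cos (θ - φ) - z * Real.cos (θ + φ)))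
      = ∫ φ in (0:ℝ)..(2 * π), Real.cos (z * Real.cos φ - z * Real.cos (φ + 2 * θ)) := by
    intro θ
    have hp : Function.Periodic
        (fun φ => Real.cos (z * Real.cos φ - z * Real.cos (φ + 2 * θ))) (2 * π) := by
      intro x
      simp only []
      rw [show x + 2 * π + 2 * θ = (x + 2 * θ) + 2 * π by ring, Real.cos_add_two_pi,
        Real.cos_add_two_pi]
    have ept : ∀ φ : ℝ, Real.cos (z * Real.cos (θ - φ) - z * Real.cos (θ + φ))
        = Real.cos (z * Real.cos (φ + -θ) - z * Real.cos (φ + -θ + 2 * θ)) := by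
      intro φ
      rw [show φ + -θ + 2 * θ = θ + φ by ring,
        show φ + -θ = -(θ - φ) by ring, Real.cos_neg]
    simp_rw [ept]
    exact shift_int (fun ψ => Real.cos (z * Real.cos ψ - z * Real.cos (ψ + 2 * θ))) hp (-θ)
  simp_rw [e2]
  rw [swap_int (fun θ φ => Real.cos (z * Real.cos φ - z * Real.cos (φ + 2 * θ))) (by fun_prop)]
  have e3 : ∀ φ : ℝ, (∫ θ in (0:ℝ)..(2 * π), Real.cos (z * Real.cos φ - z * Real.cos (φ + 2 * θ)))
      = Real.cos (z * Real.cos φ) * (2 * π * J₀ z) := by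
    intro φ
    have hp : Function.Periodic (fun ψ => Real.cos (z * Real.cos φ - z * Real.cos ψ)) (2 * π) := by
      intro x; simp [Real.cos_add_two_pi]
    have hD := doubling (fun ψ => Real.cos (z * Real.cos φ - z * Real.cos ψ)) (by fun_prop) hp φ
    rw [hD]
    simp_rw [Real.cos_sub]
    rw [intervalIntegral.integral_add
        (((by fun_prop : Continuous fun ψ => Real.cos (z * Real.cos φ) * Real.cos (z * Real.cos ψ))).intervalIntegrable _ _)
        (((by fun_prop : Continuous fun ψ => Real.sin (z * Real.cos φ) * Real.sin (z * Real.cos ψ))).intervalIntegrable _ _),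
      intervalIntegral.integral_const_mul, intervalIntegral.integral_const_mul, cosCosI, sinCosI]
    ring
  simp_rw [e3]
  rw [intervalIntegral.integral_mul_const, cosCosI]
  ring

lemma Pv_eq (c : ℝ) :
    (∫ θ in (0:ℝ)..(2 * π), 2 * π * J₀ (c * Real.sin θ)) = (2 * π * J₀ (c / 2)) ^ 2 := by
  have h : ∀ θ : ℝ, 2 * π * J₀ (c * Real.sin θ)
      = ∫ φ in (0:ℝ)..(2 * π), Real.cos (c * Real.sin θ * Real.sin φ) :=
    fun θ => (cosI _).symm
  simp_rw [h]
  exact P_eq c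

lemma Pv2 (c : ℝ) :
    (∫ θ in (0:ℝ)..(2 * π), J₀ (c * Real.sin θ)) = 2 * π * (J₀ (c / 2)) ^ 2 := by
  have h := Pv_eq c
  rw [intervalIntegral.integral_const_mul] at h
  have h2π : (2 * π : ℝ) ≠ 0 := by positivity
  apply mul_left_cancel₀ h2π
  rw [h]
  ring

lemma step1 (A c : ℝ) :
    (∫ φ in (0:ℝ)..(2 * π), Real.cos (A - c * Real.sin φ)) = Real.cos A * (2 * π * J₀ c) := by
  simp_rw [Real.cos_sub]
  rw [intervalIntegral.integral_add
      ((by fun_prop : Continuous fun φ => Real.cos A * Real.cos (c * Real.sin φ)).intervalIntegrable _ _)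
      ((by fun_prop : Continuous fun φ => Real.sin A * Real.sin (c * Real.sin φ)).intervalIntegrable _ _),
    intervalIntegral.integral_const_mul, intervalIntegral.integral_const_mul, cosI, sinI]
  ring

lemma two_levels_add (A B c d : ℝ) :
    (∫ θ in (0:ℝ)..(2 * π), ∫ φ in (0:ℝ)..(2 * π),
      (1/2 * Real.cos (A - c * (Real.sin θ * Real.sin φ))
        + 1/2 * Real.cos (B - d * (Real.sin θ * Real.sin φ))))
    = 1/2 * (Real.cos A * (2 * π * J₀ (c/2)) ^ 2)
      + 1/2 * (Real.cos B * (2 * π * J₀ (d/2)) ^ 2) := by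
  have pt : ∀ θ φ : ℝ,
      (1/2 * Real.cos (A - c * (Real.sin θ * Real.sin φ))
        + 1/2 * Real.cos (B - d * (Real.sin θ * Real.sin φ)))
      = 1/2 * Real.cos (A - c * Real.sin θ * Real.sin φ)
        + 1/2 * Real.cos (B - d * Real.sin θ * Real.sin φ) := by
    intro θ φ
    rw [mul_assoc, mul_assoc]
  simp_rw [pt]
  have inner : ∀ θ : ℝ,
      (∫ φ in (0:ℝ)..(2 * π), (1/2 * Real.cos (A - c * Real.sin θ * Real.sin φ)
        + 1/2 * Real.cos (B - d * Real.sin θ * Real.sin φ)))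
      = 1/2 * (Real.cos A * (2 * π * J₀ (c * Real.sin θ)))
        + 1/2 * (Real.cos B * (2 * π * J₀ (d * Real.sin θ))) := by
    intro θ
    rw [intervalIntegral.integral_add
        ((by fun_prop : Continuous fun φ => 1/2 * Real.cos (A - c * Real.sin θ * Real.sin φ)).intervalIntegrable _ _)
        ((by fun_prop : Continuous fun φ => 1/2 * Real.cos (B - d * Real.sin θ * Real.sin φ)).intervalIntegrable _ _),
      intervalIntegral.integral_const_mul, intervalIntegral.integral_const_mul, step1, step1]
  simp_rw [inner]
  rw [intervalIntegral.integral_add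
      ((by fun_prop : Continuous fun θ => 1/2 * (Real.cos A * (2 * π * J₀ (c * Real.sin θ)))).intervalIntegrable _ _)
      ((by fun_prop : Continuous fun θ => 1/2 * (Real.cos B * (2 * π * J₀ (d * Real.sin θ)))).intervalIntegrable _ _),
    ]
  simp only [intervalIntegral.integral_const_mul]
  rw [Pv2, Pv2]
  ring

lemma two_levels_mul (c d K L : ℝ) :
    (∫ θ in (0:ℝ)..(2 * π), ∫ φ in (0:ℝ)..(2 * π),
      (1/2 * (Real.cos (c * (Real.sin θ * Real.sin φ)) * K)
        + 1/2 * (Real.cos (d * (Real.sin θ * Real.sin φ)) * L)))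
    = 1/2 * ((2 * π * J₀ (c/2)) ^ 2 * K) + 1/2 * ((2 * π * J₀ (d/2)) ^ 2 * L) := by
  have pt : ∀ θ φ : ℝ,
      (1/2 * (Real.cos (c * (Real.sin θ * Real.sin φ)) * K)
        + 1/2 * (Real.cos (d * (Real.sin θ * Real.sin φ)) * L))
      = (1/2 * K) * Real.cos (c * Real.sin θ * Real.sin φ)
        + (1/2 * L) * Real.cos (d * Real.sin θ * Real.sin φ) := by
    intro θ φ
    rw [mul_assoc c, mul_assoc d]
    ring
  simp_rw [pt]
  have inner : ∀ θ : ℝ,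
      (∫ φ in (0:ℝ)..(2 * π), ((1/2 * K) * Real.cos (c * Real.sin θ * Real.sin φ)
        + (1/2 * L) * Real.cos (d * Real.sin θ * Real.sin φ)))
      = (1/2 * K) * (2 * π * J₀ (c * Real.sin θ)) + (1/2 * L) * (2 * π * J₀ (d * Real.sin θ)) := by
    intro θ
    rw [intervalIntegral.integral_add
        ((by fun_prop : Continuous fun φ => (1/2 * K) * Real.cos (c * Real.sin θ * Real.sin φ)).intervalIntegrable _ _)
        ((by fun_prop : Continuous fun φ => (1/2 * L) * Real.cos (d * Real.sin θ * Real.sin φ)).intervalIntegrable _ _),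
      intervalIntegral.integral_const_mul, intervalIntegral.integral_const_mul, cosI, cosI]
  simp_rw [inner]
  rw [intervalIntegral.integral_add
      ((by fun_prop : Continuous fun θ => (1/2 * K) * (2 * π * J₀ (c * Real.sin θ))).intervalIntegrable _ _)
      ((by fun_prop : Continuous fun θ => (1/2 * L) * (2 * π * J₀ (d * Real.sin θ))).intervalIntegrable _ _),
    ]
  simp only [intervalIntegral.integral_const_mul]
  rw [Pv2, Pv2]
  ring

/-- Expectation over two independent pairs of angles, each uniform on `[0, 2π]²`. -/
noncomputable def E4 (f : ℝ → ℝ → ℝ → ℝ → ℝ) : ℝ :=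
  (1 / (2 * π) ^ 4) *
    ∫ θ₁ in (0:ℝ)..(2 * π), ∫ φ₁ in (0:ℝ)..(2 * π),
      ∫ θ₂ in (0:ℝ)..(2 * π), ∫ φ₂ in (0:ℝ)..(2 * π), f θ₁ φ₁ θ₂ φ₂

theorem stmt_13 (a s₁ s₂ : ℝ) :
    E4 (fun θ₁ φ₁ θ₂ φ₂ =>
      Real.cos (s₁ * a * (Real.sin θ₁ * Real.sin φ₁ - Real.sin θ₂ * Real.sin φ₂)) *
      Real.cos (s₂ * a * (Real.sin θ₁ * Real.sin φ₁ - Real.sin θ₂ * Real.sin φ₂)))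
    = (1 / 2) * ((J₀ ((s₁ + s₂) * a / 2)) ^ 4 + (J₀ ((s₁ - s₂) * a / 2)) ^ 4) := by
  have prodsum : ∀ x y : ℝ, Real.cos x * Real.cos y
      = 1/2 * Real.cos (x + y) + 1/2 * Real.cos (x - y) := by
    intro x y; rw [Real.cos_add, Real.cos_sub]; ring
  have argrw1 : ∀ X Y : ℝ, s₁ * a * (X - Y) + s₂ * a * (X - Y)
      = (s₁ + s₂) * a * X - (s₁ + s₂) * a * Y := by intro X Y; ring
  have argrw2 : ∀ X Y : ℝ, s₁ * a * (X - Y) - s₂ * a * (X - Y)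
      = (s₁ - s₂) * a * X - (s₁ - s₂) * a * Y := by intro X Y; ring
  set u := (s₁ + s₂) * a with hu
  set v := (s₁ - s₂) * a with hv
  rw [E4]
  simp_rw [prodsum, argrw1, argrw2]
  have key : ∀ X : ℝ,
      (∫ θ₂ in (0:ℝ)..(2 * π), ∫ φ₂ in (0:ℝ)..(2 * π),
        (1/2 * Real.cos (u * X - u * (Real.sin θ₂ * Real.sin φ₂))
          + 1/2 * Real.cos (v * X - v * (Real.sin θ₂ * Real.sin φ₂))))
      = 1/2 * (Real.cos (u * X) * (2 * π * J₀ (u/2)) ^ 2)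
        + 1/2 * (Real.cos (v * X) * (2 * π * J₀ (v/2)) ^ 2) :=
    fun X => two_levels_add (u * X) (v * X) u v
  simp_rw [key]
  rw [two_levels_mul]
  have h2π : (π : ℝ) ≠ 0 := Real.pi_ne_zero
  field_simp
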